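/- Let F₁(z₁,z₂) = (z₁φ(p), z₂/φ(p)) with p = z₁z₂ and φ(0) ≠ 0 (so P(F₁) = id), and let F₂(z₁,z₂) = (z₁φ₂(p), z₂ψ₂(p)) with ρ₂(t) = tφ₂(t)ψ₂(t). If F₁ and F₂ commute, then either φ is constant (F₁ is linear diagonal) or ρ₂ has finite compositional order. -/

import Mathlib

noncomputable section

def compP (f g : PowerSeries ℂ) : PowerSeries ℂ :=
  PowerSeries.mk fun n =>
    ∑ j ∈ Finset.range (n + 1), PowerSeries.coeff j f * PowerSeries.coeff n (g ^ j)

def iterP (g : PowerSeries ℂ) : ℕ → PowerSeries ℂ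
  | 0 => PowerSeries.X
  | m + 1 => compP g (iterP g m)

abbrev FormalMap (n : ℕ) := Fin n → MvPowerSeries (Fin n) ℂ

def degreeOf {n : ℕ} (d : Fin n →₀ ℕ) : ℕ := d.sum fun _ m => m

def substM {n : ℕ} (G : FormalMap n) (f : MvPowerSeries (Fin n) ℂ) :
    MvPowerSeries (Fin n) ℂ :=
  fun d =>
    ∑ e ∈ Finset.Iic (Finsupp.equivFunOnFinite.symm fun _ => degreeOf d),
      MvPowerSeries.coeff e f * MvPowerSeries.coeff d (∏ i, G i ^ e i)

def compM {n : ℕ} (F G : FormalMap n) : FormalMap n := fun i => substM G (F i)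

def idM (n : ℕ) : FormalMap n := fun i => MvPowerSeries.X i

def iterM {n : ℕ} (F : FormalMap n) : ℕ → FormalMap n
  | 0 => idM n
  | m + 1 => compM F (iterM F m)

def linMatrix {n : ℕ} (F : FormalMap n) : Matrix (Fin n) (Fin n) ℂ :=
  fun i j => MvPowerSeries.coeff (Finsupp.single j 1) (F i)

def linMap {n : ℕ} (F : FormalMap n) : FormalMap n :=
  fun i => ∑ j, MvPowerSeries.C (σ := Fin n) (R := ℂ) (linMatrix F i j) * MvPowerSeries.X j

def substPM (q : MvPowerSeries (Fin 2) ℂ) (φ : PowerSeries ℂ) : MvPowerSeries (Fin 2) ℂ :=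
  fun d =>
    ∑ j ∈ Finset.range (degreeOf d + 1),
      PowerSeries.coeff j φ * MvPowerSeries.coeff d (q ^ j)

def pXY : MvPowerSeries (Fin 2) ℂ := MvPowerSeries.X 0 * MvPowerSeries.X 1

def Mmap (φ ψ : PowerSeries ℂ) : FormalMap 2 :=
  ![MvPowerSeries.X 0 * substPM pXY φ, MvPowerSeries.X 1 * substPM pXY ψ]

section AuxOneVar
open PowerSeries

lemma coeff_compP (f g : PowerSeries ℂ) (n : ℕ) :
    coeff n (compP f g) =
      ∑ j ∈ Finset.range (n + 1), coeff j f * coeff n (g ^ j) := by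
  simp [compP, coeff_mk]

lemma compP_X (f : PowerSeries ℂ) : compP f X = f := by
  ext n
  rw [coeff_compP, Finset.sum_eq_single n]
  · simp [coeff_X_pow]
  · intro j hj hne
    simp [coeff_X_pow, (Ne.symm hne)]
  · intro h
    exact absurd (Finset.self_mem_range_succ n) h

lemma coeff_pow_eq_zero {g : PowerSeries ℂ} (hg : constantCoeff g = 0) {j n : ℕ}
    (h : n < j) : coeff n (g ^ j) = 0 := by
  have h1 : (X : PowerSeries ℂ) ^ j ∣ g ^ j := pow_dvd_pow_of_dvd (X_dvd_iff.mpr hg) j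
  exact X_pow_dvd_iff.mp h1 n h

lemma coeff_pow_self {g : PowerSeries ℂ} (hg : constantCoeff g = 0) (j : ℕ) :
    coeff j (g ^ j) = (coeff 1 g) ^ j := by
  obtain ⟨w, hw⟩ := X_dvd_iff.mpr hg
  have hw1 : constantCoeff w = coeff 1 g := by
    have := congrArg (coeff 1) hw
    simpa using this.symm
  rw [hw, mul_pow, coeff_X_pow_mul' (w ^ j) j j, if_pos le_rfl]
  simp [hw1, map_pow]

lemma coeff_pow_small {u : PowerSeries ℂ} {m : ℕ} (hu : ∀ j < m, coeff j u = 0)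
    {r n : ℕ} (h : n < r * m) : coeff n (u ^ r) = 0 := by
  have h1 : (X : PowerSeries ℂ) ^ m ∣ u := X_pow_dvd_iff.mpr hu
  have h2 : ((X : PowerSeries ℂ) ^ m) ^ r ∣ u ^ r := pow_dvd_pow_of_dvd h1 r
  rw [← pow_mul] at h2
  exact X_pow_dvd_iff.mp h2 n (by rw [mul_comm] at h; exact h)

lemma coeff_mul_pow_small {γ ρ : PowerSeries ℂ} (hρ : constantCoeff ρ = 0) {a n : ℕ}
    (h : n < a) : coeff n (γ * ρ ^ a) = 0 := by
  rw [coeff_mul]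
  apply Finset.sum_eq_zero
  intro p hp
  rw [Finset.HasAntidiagonal.mem_antidiagonal] at hp
  rw [coeff_pow_eq_zero hρ (lt_of_le_of_lt (hp ▸ Nat.le_add_left p.2 p.1) h), mul_zero]


lemma compP_one (h : PowerSeries ℂ) : compP 1 h = 1 := by
  ext n
  rw [coeff_compP, Finset.sum_eq_single 0]
  · simp
  · intro j hj hne
    simp [coeff_one, hne]
  · intro hn
    simp at hn

lemma compP_mul {h : PowerSeries ℂ} (hh : constantCoeff h = 0) (f g : PowerSeries ℂ) :
    compP (f * g) h = compP f h * compP g h := by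
  ext n
  rw [coeff_compP, PowerSeries.coeff_mul]
  -- RHS
  have hR : ∀ q ∈ Finset.HasAntidiagonal.antidiagonal n,
      coeff q.1 (compP f h) * coeff q.2 (compP g h)
        = ∑ a ∈ Finset.range (n+1), ∑ b ∈ Finset.range (n+1),
            coeff a f * coeff b g * (coeff q.1 (h^a) * coeff q.2 (h^b)) := by
    intro q hq
    rw [Finset.HasAntidiagonal.mem_antidiagonal] at hq
    rw [coeff_compP, coeff_compP]
    rw [Finset.sum_subset (Finset.range_subset_range.mpr (by omega : q.1 + 1 ≤ n + 1))
        (fun a _ ha => by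
          rw [coeff_pow_eq_zero hh (by simp at ha ⊢; omega), mul_zero]),
      Finset.sum_subset (Finset.range_subset_range.mpr (by omega : q.2 + 1 ≤ n + 1))
        (fun b _ hb => by
          rw [coeff_pow_eq_zero hh (by simp at hb ⊢; omega), mul_zero])]
    rw [Finset.sum_mul_sum]
    apply Finset.sum_congr rfl; intro a _
    apply Finset.sum_congr rfl; intro b _
    ring
  rw [Finset.sum_congr rfl hR, Finset.sum_comm]
  -- now RHS = ∑ a ∑ q ∑ b; swap inner as well
  have hR2 : ∀ a ∈ Finset.range (n+1),
      (∑ q ∈ Finset.HasAntidiagonal.antidiagonal n, ∑ b ∈ Finset.range (n+1),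
        coeff a f * coeff b g * (coeff q.1 (h^a) * coeff q.2 (h^b)))
      = ∑ b ∈ Finset.range (n+1),
          coeff a f * coeff b g * coeff n (h^(a+b)) := by
    intro a _
    rw [Finset.sum_comm]
    apply Finset.sum_congr rfl
    intro b _
    rw [pow_add, PowerSeries.coeff_mul, Finset.mul_sum]
  rw [Finset.sum_congr rfl hR2]
  -- LHS: ∑ j ≤ n, (∑ p ∈ antidiagonal j, f_p1 g_p2) h^j _n
  have hL : ∀ j ∈ Finset.range (n+1),
      coeff j (f * g) * coeff n (h ^ j)
        = ∑ p ∈ Finset.HasAntidiagonal.antidiagonal j, coeff p.1 f * coeff p.2 g * coeff n (h^(p.1+p.2)) := by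
    intro j hj
    rw [PowerSeries.coeff_mul, Finset.sum_mul]
    apply Finset.sum_congr rfl
    intro p hp
    rw [Finset.HasAntidiagonal.mem_antidiagonal] at hp
    rw [hp]
  rw [Finset.sum_congr rfl hL]
  -- turn LHS double sum into sum over range × range
  rw [Finset.sum_sigma']
  rw [← Finset.sum_product']
  rw [← Finset.sum_subset
      (Finset.filter_subset (fun p : ℕ × ℕ => p.1 + p.2 ≤ n)
        (Finset.range (n+1) ×ˢ Finset.range (n+1)))
      (fun x _ hx => by
        simp only [Finset.mem_filter, Finset.mem_product, Finset.mem_range, not_and,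
          not_le] at hx
        rcases Classical.em (x.1 < n + 1 ∧ x.2 < n + 1) with h1 | h1
        · rw [coeff_pow_eq_zero hh (hx ⟨h1.1, h1.2⟩), mul_zero]
        · exact absurd (Finset.mem_product.mp ‹x ∈ _›) (by simpa using h1))]
  apply Finset.sum_nbij' (fun x : (_ : ℕ) × (ℕ × ℕ) => x.2) (fun p => ⟨p.1 + p.2, p⟩)
  · rintro ⟨j, p⟩ hx
    simp only [Finset.mem_sigma, Finset.mem_range, Finset.HasAntidiagonal.mem_antidiagonal] at hx
    simp only [Finset.mem_filter, Finset.mem_product, Finset.mem_range]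
    omega
  · rintro p hp
    rw [Finset.mem_filter] at hp
    have h3 : p.1 + p.2 ≤ n := hp.2
    simp only [Finset.mem_sigma, Finset.mem_range, Finset.HasAntidiagonal.mem_antidiagonal]
    exact ⟨by omega, trivial⟩
  · rintro ⟨j, p⟩ hx
    simp only [Finset.mem_sigma, Finset.mem_range, Finset.HasAntidiagonal.mem_antidiagonal] at hx
    simp [hx.2]
  · rintro p _
    rfl
  · rintro ⟨j, p⟩ _
    rfl

lemma compP_pow {h : PowerSeries ℂ} (hh : constantCoeff h = 0) (g : PowerSeries ℂ)
    (i : ℕ) : compP (g ^ i) h = (compP g h) ^ i := by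
  induction i with
  | zero => simpa using compP_one h
  | succ i ih => rw [pow_succ, compP_mul hh, ih, pow_succ]

lemma compP_assoc {g h : PowerSeries ℂ} (f : PowerSeries ℂ)
    (hg : constantCoeff g = 0) (hh : constantCoeff h = 0) :
    compP (compP f g) h = compP f (compP g h) := by
  ext n
  rw [coeff_compP, coeff_compP]
  have hL : ∀ j ∈ Finset.range (n+1),
      coeff j (compP f g) * coeff n (h ^ j)
        = ∑ i ∈ Finset.range (n+1), coeff i f * coeff j (g ^ i) * coeff n (h ^ j) := by
    intro j hj
    rw [Finset.mem_range] at hj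
    rw [coeff_compP, Finset.sum_mul]
    rw [Finset.sum_subset (Finset.range_subset_range.mpr (by omega : j + 1 ≤ n + 1))]
    intro i hi hi2
    rw [Finset.mem_range] at hi hi2
    rw [coeff_pow_eq_zero hg (by omega), mul_zero, zero_mul]
  rw [Finset.sum_congr rfl hL, Finset.sum_comm]
  apply Finset.sum_congr rfl
  intro i _
  rw [← compP_pow hh, coeff_compP, Finset.mul_sum]
  apply Finset.sum_congr rfl
  intro j _
  ring

lemma constantCoeff_compP (f g : PowerSeries ℂ) :
    constantCoeff (compP f g) = constantCoeff f := by
  rw [← coeff_zero_eq_constantCoeff, coeff_compP]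
  simp

lemma coeff_one_compP (f g : PowerSeries ℂ) :
    coeff 1 (compP f g) = coeff 1 f * coeff 1 g := by
  rw [coeff_compP]
  rw [Finset.sum_range_succ, Finset.sum_range_one]
  simp [coeff_one]

lemma constantCoeff_iterP {ρ : PowerSeries ℂ} (hρ : constantCoeff ρ = 0) (n : ℕ) :
    constantCoeff (iterP ρ n) = 0 := by
  cases n with
  | zero => simp [iterP]
  | succ n => rw [iterP, constantCoeff_compP]; exact hρ

lemma coeff_one_iterP (ρ : PowerSeries ℂ) (n : ℕ) :
    coeff 1 (iterP ρ n) = (coeff 1 ρ) ^ n := by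
  induction n with
  | zero => simp [iterP, coeff_X]
  | succ n ih => rw [iterP, coeff_one_compP, ih]; ring

lemma compP_iterP {φ ρ : PowerSeries ℂ} (hρ : constantCoeff ρ = 0)
    (hfix : compP φ ρ = φ) (n : ℕ) : compP φ (iterP ρ n) = φ := by
  induction n with
  | zero => exact compP_X φ
  | succ n ih =>
    rw [iterP, ← compP_assoc φ hρ (constantCoeff_iterP hρ n), hfix, ih]

lemma lin_pow_eq_one {φ ρ : PowerSeries ℂ} {k : ℕ} (hk : 1 ≤ k)
    (hck : coeff k φ ≠ 0) (hmin : ∀ j, 1 ≤ j → j < k → coeff j φ = 0)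
    (hρ : constantCoeff ρ = 0) (hfix : compP φ ρ = φ) :
    (coeff 1 ρ) ^ k = 1 := by
  have h := congrArg (coeff k) hfix
  rw [coeff_compP, Finset.sum_eq_single k] at h
  · rw [coeff_pow_self hρ] at h
    exact mul_left_cancel₀ hck (by rw [mul_one]; exact h)
  · intro j hj hne
    rcases Nat.eq_zero_or_pos j with rfl | hj1
    · rw [pow_zero, coeff_one, if_neg (by omega), mul_zero]
    · rw [hmin j hj1 (by rw [Finset.mem_range] at hj; omega), zero_mul]
  · intro hk2
    exact absurd (Finset.self_mem_range_succ k) hk2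


lemma finite_order_aux {φ g : PowerSeries ℂ} {k : ℕ} (hk : 1 ≤ k)
    (hck : coeff k φ ≠ 0) (hmin : ∀ j, 1 ≤ j → j < k → coeff j φ = 0)
    (hg0 : constantCoeff g = 0) (hg1 : coeff 1 g = 1)
    (hfix : compP φ g = φ) : g = X := by
  classical
  by_contra hgX
  have hQ : ∃ n, coeff n g ≠ coeff n X := by
    by_contra hc; push_neg at hc; exact hgX (PowerSeries.ext hc)
  set m := Nat.find hQ with hmdef
  have hm : coeff m g ≠ coeff m X := Nat.find_spec hQ
  have hmlt : ∀ j < m, coeff j g = coeff j X := fun j hj => not_not.mp (Nat.find_min hQ hj)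
  have hm2 : 2 ≤ m := by
    by_contra hm2
    push_neg at hm2
    interval_cases m
    · exact hm (by simp [coeff_zero_eq_constantCoeff, hg0])
    · exact hm (by rw [hg1, coeff_one_X])
  set u := g - X with hudef
  have hu : ∀ j < m, coeff j u = 0 := fun j hj => by
    rw [hudef, map_sub, hmlt j hj, sub_self]
  set b := coeff m u with hbdef
  have hb : b ≠ 0 := by rw [hbdef, hudef, map_sub]; exact sub_ne_zero.mpr hm
  set N := k + m - 1 with hNdef
  have hkN : k < N := by omega
  have hgu : g = X + u := by rw [hudef]; ring
  have hcast : ∀ (s : PowerSeries ℂ) (c : ℕ) (n : ℕ),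
      coeff n (s * (c : PowerSeries ℂ)) = coeff n s * (c : ℂ) := by
    intro s c n; rw [← map_natCast (C (R := ℂ)) c, coeff_mul_C]
  have hA : ∀ j, k < j → j < N → coeff N (g ^ j) = 0 := by
    intro j hj1 hj2
    rw [hgu, add_pow, map_sum]
    apply Finset.sum_eq_zero
    intro i hi
    rw [Finset.mem_range] at hi
    rw [hcast, coeff_X_pow_mul', if_pos (by omega : i ≤ N)]
    rcases eq_or_lt_of_le (by omega : i ≤ j) with rfl | hij
    · rw [Nat.sub_self, pow_zero, coeff_one, if_neg (by omega), zero_mul]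
    · have hr1 : 1 ≤ j - i := by omega
      have hsmall : N - i < (j - i) * m := by
        rcases eq_or_lt_of_le hr1 with h1 | h1
        · rw [← h1, one_mul]; omega
        · have h3 : 2 * (j-i) ≤ (j-i) * m := by
            calc 2*(j-i) = (j-i)*2 := by ring
              _ ≤ (j-i)*m := Nat.mul_le_mul_left (j-i) hm2
          have h4 : 2 * m ≤ (j-i) * m := Nat.mul_le_mul_right m h1
          omega
      rw [coeff_pow_small hu hsmall, zero_mul]
  have hB : coeff N (g ^ k) = (k : ℂ) * b := by
    rw [hgu, add_pow, map_sum]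
    rw [Finset.sum_eq_single_of_mem (k-1) (by rw [Finset.mem_range]; omega)]
    · rw [hcast, coeff_X_pow_mul', if_pos (by omega : k - 1 ≤ N)]
      rw [show k - (k-1) = 1 by omega, pow_one, show N - (k-1) = m by omega]
      rw [show k.choose (k-1) = k by
        rw [Nat.choose_symm (by omega : 1 ≤ k), Nat.choose_one_right]]
      ring
    · intro i hi hne
      rw [Finset.mem_range] at hi
      rw [hcast, coeff_X_pow_mul', if_pos (by omega : i ≤ N)]
      rcases eq_or_lt_of_le (by omega : i ≤ k) with rfl | hik
      · rw [Nat.sub_self, pow_zero, coeff_one, if_neg (by omega), zero_mul]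
      · have h2 : 2 ≤ k - i := by omega
        have hsmall : N - i < (k - i) * m := by
          have h3 : 2 * (k-i) ≤ (k-i) * m := by
            calc 2*(k-i) = (k-i)*2 := by ring
              _ ≤ (k-i)*m := Nat.mul_le_mul_left (k-i) hm2
          have h4 : 2 * m ≤ (k-i) * m := Nat.mul_le_mul_right m h2
          omega
        rw [coeff_pow_small hu hsmall, zero_mul]
  have key := congrArg (coeff N) hfix
  rw [coeff_compP] at key
  have hfun : ∀ j ∈ Finset.range (N+1),
      coeff j φ * coeff N (g^j)
        = (if j = k then coeff k φ * ((k:ℂ)*b) else 0)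
          + (if j = N then coeff N φ else 0) := by
    intro j hj
    rw [Finset.mem_range] at hj
    rcases eq_or_ne j k with rfl | hjk
    · rw [if_pos rfl, if_neg (by omega), hB, add_zero]
    · rw [if_neg hjk]
      rcases eq_or_ne j N with rfl | hjN
      · rw [if_pos rfl, coeff_pow_self hg0, hg1, one_pow, mul_one, zero_add]
      · rw [if_neg hjN, add_zero]
        rcases Nat.eq_zero_or_pos j with rfl | hj1
        · rw [pow_zero, coeff_one, if_neg (by omega), mul_zero]
        · rcases lt_or_gt_of_ne hjk with h | h
          · rw [hmin j hj1 h, zero_mul]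
          · rw [hA j h (by omega), mul_zero]
  rw [Finset.sum_congr rfl hfun, Finset.sum_add_distrib,
    Finset.sum_ite_eq' (Finset.range (N+1)) k,
    Finset.sum_ite_eq' (Finset.range (N+1)) N,
    if_pos (by rw [Finset.mem_range]; omega),
    if_pos (by rw [Finset.mem_range]; omega)] at key
  have h0 : coeff k φ * ((k:ℂ)*b) = 0 := by linear_combination key
  rcases mul_eq_zero.mp h0 with h | h
  · exact hck h
  · rcases mul_eq_zero.mp h with h | h
    · exact (Nat.cast_ne_zero (R := ℂ)).mpr (by omega) h
    · exact hb h

lemma order_finite {φ ρ : PowerSeries ℂ} (hρ0 : constantCoeff ρ = 0)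
    (hρ1 : coeff 1 ρ ≠ 0) (hfix : compP φ ρ = φ)
    (hnc : ¬ ∃ c : ℂ, φ = C c) : ∃ m : ℕ, 0 < m ∧ iterP ρ m = X := by
  classical
  have hQ : ∃ n, 1 ≤ n ∧ coeff n φ ≠ 0 := by
    by_contra hc
    push_neg at hc
    apply hnc
    refine ⟨constantCoeff φ, ?_⟩
    ext n
    rcases Nat.eq_zero_or_pos n with rfl | hn
    · simp
    · rw [hc n hn, coeff_C, if_neg (by omega)]
  have hk1 := (Nat.find_spec hQ).1
  have hck := (Nat.find_spec hQ).2
  have hmin : ∀ j, 1 ≤ j → j < Nat.find hQ → coeff j φ = 0 := by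
    intro j h1 h2
    by_contra hne
    exact Nat.find_min hQ h2 ⟨h1, hne⟩
  refine ⟨Nat.find hQ, by omega, ?_⟩
  exact finite_order_aux hk1 hck hmin (constantCoeff_iterP hρ0 _)
    (by rw [coeff_one_iterP, lin_pow_eq_one hk1 hck hmin hρ0 hfix])
    (compP_iterP hρ0 hfix _)

lemma coeff_mul_compP (γ α ρ : PowerSeries ℂ) (hρ0 : constantCoeff ρ = 0) (m : ℕ) :
    coeff m (γ * compP α ρ)
      = ∑ a ∈ Finset.range (m+1),
          coeff a α * coeff m (γ * ρ ^ a) := by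
  rw [PowerSeries.coeff_mul]
  have h1 : ∀ p ∈ Finset.HasAntidiagonal.antidiagonal m,
      coeff p.1 γ * coeff p.2 (compP α ρ)
        = ∑ a ∈ Finset.range (m+1),
            coeff a α * (coeff p.1 γ * coeff p.2 (ρ ^ a)) := by
    intro p hp
    rw [Finset.HasAntidiagonal.mem_antidiagonal] at hp
    rw [coeff_compP]
    rw [Finset.sum_subset (Finset.range_subset_range.mpr (by omega : p.2 + 1 ≤ m + 1))
      (fun a ha hna => by
        rw [Finset.mem_range, not_lt] at hna
        rw [coeff_pow_eq_zero hρ0 (by omega), mul_zero])]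
    rw [Finset.mul_sum]
    apply Finset.sum_congr rfl
    intro a _
    ring
  rw [Finset.sum_congr rfl h1, Finset.sum_comm]
  apply Finset.sum_congr rfl
  intro a _
  rw [PowerSeries.coeff_mul, Finset.mul_sum]

end AuxOneVar

def Dg (a b : ℕ) : Fin 2 →₀ ℕ := Finsupp.single (0 : Fin 2) a + Finsupp.single 1 b

lemma Dg_zero (a b : ℕ) : Dg a b 0 = a := by
  simp [Dg, Finsupp.single_apply, show (1 : Fin 2) ≠ 0 by decide]

lemma Dg_one (a b : ℕ) : Dg a b 1 = b := by
  simp [Dg, Finsupp.single_apply, show (0 : Fin 2) ≠ 1 by decide]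

lemma eq_Dg (d : Fin 2 →₀ ℕ) : d = Dg (d 0) (d 1) := by
  ext i
  fin_cases i
  · exact (Dg_zero _ _).symm
  · exact (Dg_one _ _).symm

lemma Dg_add (a b c d : ℕ) : Dg a b + Dg c d = Dg (a+c) (b+d) := by
  simp only [Dg, Finsupp.single_add]
  abel

lemma Dg_inj {a b c d : ℕ} (h : Dg a b = Dg c d) : a = c ∧ b = d := by
  constructor
  · have := congrArg (fun f : Fin 2 →₀ ℕ => f 0) h
    simpa [Dg_zero] using this
  · have := congrArg (fun f : Fin 2 →₀ ℕ => f 1) h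
    simpa [Dg_one] using this

lemma Dg_le {a b : ℕ} {e : Fin 2 →₀ ℕ} (h0 : a ≤ e 0) (h1 : b ≤ e 1) : Dg a b ≤ e := by
  rw [Finsupp.le_def]
  intro i
  rcases (by decide : ∀ i : Fin 2, i = 0 ∨ i = 1) i with rfl | rfl
  · rw [Dg_zero]; exact h0
  · rw [Dg_one]; exact h1

lemma degreeOf_eq (d : Fin 2 →₀ ℕ) : degreeOf d = d 0 + d 1 := by
  rw [degreeOf, Finsupp.sum_fintype _ _ (fun _ => rfl), Fin.sum_univ_two]

def Tm (f : PowerSeries ℂ) : MvPowerSeries (Fin 2) ℂ :=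
  fun d => if d 0 = d 1 then PowerSeries.coeff (d 0) f else 0

lemma coeff_Tm (d : Fin 2 →₀ ℕ) (f : PowerSeries ℂ) :
    MvPowerSeries.coeff d (Tm f) = if d 0 = d 1 then PowerSeries.coeff (d 0) f else 0 :=
  rfl

lemma Dg_zero_zero : Dg 0 0 = 0 := by
  ext i
  fin_cases i
  · exact Dg_zero 0 0
  · exact Dg_one 0 0

lemma coeff_Tm_Dg (a : ℕ) (f : PowerSeries ℂ) :
    MvPowerSeries.coeff (Dg a a) (Tm f) = PowerSeries.coeff a f := by
  rw [coeff_Tm, Dg_zero, Dg_one, if_pos rfl]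

lemma Tm_injective {f g : PowerSeries ℂ} (h : Tm f = Tm g) : f = g := by
  ext n
  have := congrArg (MvPowerSeries.coeff (Dg n n)) h
  rwa [coeff_Tm_Dg, coeff_Tm_Dg] at this

lemma Tm_one : Tm 1 = 1 := by
  apply MvPowerSeries.ext
  intro d
  rw [coeff_Tm, MvPowerSeries.coeff_one, PowerSeries.coeff_one]
  by_cases hd : d 0 = d 1
  · rw [if_pos hd]
    by_cases h0 : d 0 = 0
    · rw [if_pos h0, if_pos]
      rw [eq_Dg d, h0, ← hd, h0, Dg_zero_zero]
    · rw [if_neg h0, if_neg]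
      intro hc
      exact h0 (by rw [hc]; rfl)
  · rw [if_neg hd, if_neg]
    intro hc
    exact hd (by rw [hc]; rfl)

lemma Tm_mul (f g : PowerSeries ℂ) : Tm (f * g) = Tm f * Tm g := by
  classical
  have hoff : ∀ d : Fin 2 →₀ ℕ, d 0 ≠ d 1 →
      MvPowerSeries.coeff d (Tm f * Tm g) = 0 := by
    intro d hd
    rw [MvPowerSeries.coeff_mul]
    apply Finset.sum_eq_zero
    intro p hp
    rw [Finset.HasAntidiagonal.mem_antidiagonal] at hp
    by_cases h1 : p.1 0 = p.1 1
    · by_cases h2 : p.2 0 = p.2 1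
      · exfalso
        apply hd
        have h0 := congrArg (fun f : Fin 2 →₀ ℕ => f 0) hp
        have h1' := congrArg (fun f : Fin 2 →₀ ℕ => f 1) hp
        simp only [Finsupp.add_apply] at h0 h1'
        rw [← h0, ← h1', h1, h2]
      · rw [show MvPowerSeries.coeff p.2 (Tm g) = 0 from by
          rw [coeff_Tm, if_neg h2], mul_zero]
    · rw [show MvPowerSeries.coeff p.1 (Tm f) = 0 from by
        rw [coeff_Tm, if_neg h1], zero_mul]
  have key : ∀ a : ℕ, MvPowerSeries.coeff (Dg a a) (Tm f * Tm g)
      = PowerSeries.coeff a (f * g) := by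
    intro a
    rw [MvPowerSeries.coeff_mul, PowerSeries.coeff_mul]
    rw [← Finset.sum_subset
        (h := fun p (hp : p ∈ (Finset.HasAntidiagonal.antidiagonal a).image
            (fun q : ℕ × ℕ => (Dg q.1 q.1, Dg q.2 q.2))) => by
          rw [Finset.mem_image] at hp
          obtain ⟨q, hq, rfl⟩ := hp
          rw [Finset.HasAntidiagonal.mem_antidiagonal] at hq ⊢
          rw [Dg_add, hq])
        (hf := by
          intro p hp hnp
          rw [Finset.HasAntidiagonal.mem_antidiagonal] at hp
          by_cases h1 : p.1 0 = p.1 1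
          · by_cases h2 : p.2 0 = p.2 1
            · exfalso
              apply hnp
              rw [Finset.mem_image]
              refine ⟨(p.1 0, p.2 0), ?_, ?_⟩
              · rw [Finset.HasAntidiagonal.mem_antidiagonal]
                have h0 := congrArg (fun f : Fin 2 →₀ ℕ => f 0) hp
                simp only [Finsupp.add_apply] at h0
                rw [h0, Dg_zero]
              · have e1 := eq_Dg p.1
                have e2 := eq_Dg p.2
                rw [← h1] at e1
                rw [← h2] at e2
                rw [← e1, ← e2]
            · rw [show MvPowerSeries.coeff p.2 (Tm g) = 0 from by
                rw [coeff_Tm, if_neg h2], mul_zero]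
          · rw [show MvPowerSeries.coeff p.1 (Tm f) = 0 from by
              rw [coeff_Tm, if_neg h1], zero_mul])]
    rw [Finset.sum_image (by
      intro q1 _ q2 _ h
      have h1 := (Dg_inj (congrArg Prod.fst h)).1
      have h2 := (Dg_inj (congrArg Prod.snd h)).1
      exact Prod.ext h1 h2)]
    apply Finset.sum_congr rfl
    intro q _
    rw [coeff_Tm_Dg, coeff_Tm_Dg]
  apply MvPowerSeries.ext
  intro d
  by_cases hd : d 0 = d 1
  · have hdeq : d = Dg (d 0) (d 0) := by
      conv_lhs => rw [eq_Dg d]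
      rw [← hd]
    have h2 : MvPowerSeries.coeff d (Tm f * Tm g)
        = PowerSeries.coeff (d 0) (f * g) := by
      conv_lhs => rw [hdeq]
      exact key (d 0)
    rw [coeff_Tm, if_pos hd, h2]
  · rw [coeff_Tm, if_neg hd, hoff d hd]

lemma Tm_pow (f : PowerSeries ℂ) (n : ℕ) : Tm (f ^ n) = (Tm f) ^ n := by
  induction n with
  | zero => simpa using Tm_one
  | succ n ih => rw [pow_succ, Tm_mul, ih, pow_succ]

lemma Tm_X : Tm PowerSeries.X = MvPowerSeries.X 0 * MvPowerSeries.X 1 := by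
  apply MvPowerSeries.ext
  intro d
  rw [coeff_Tm]
  have hXX : (MvPowerSeries.X 0 * MvPowerSeries.X 1 : MvPowerSeries (Fin 2) ℂ)
      = MvPowerSeries.monomial (Dg 1 1) 1 := by
    rw [show (MvPowerSeries.X 0 : MvPowerSeries (Fin 2) ℂ)
        = MvPowerSeries.monomial (Finsupp.single 0 1) 1 from rfl,
      show (MvPowerSeries.X 1 : MvPowerSeries (Fin 2) ℂ)
        = MvPowerSeries.monomial (Finsupp.single 1 1) 1 from rfl,
      MvPowerSeries.monomial_mul_monomial, one_mul, Dg]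
  rw [hXX, MvPowerSeries.coeff_monomial]
  by_cases hd : d 0 = d 1
  · rw [if_pos hd, PowerSeries.coeff_X]
    by_cases h1 : d 0 = 1
    · rw [if_pos h1, if_pos]
      rw [eq_Dg d, h1, ← hd, h1]
    · rw [if_neg h1, if_neg]
      intro hc
      exact h1 (by rw [hc, Dg_zero])
  · rw [if_neg hd, if_neg]
    intro hc
    exact hd (by rw [hc, Dg_zero, Dg_one])


lemma pXY_pow (j : ℕ) : pXY ^ j = MvPowerSeries.monomial (Dg j j) 1 := by
  rw [pXY, mul_pow, MvPowerSeries.X_pow_eq, MvPowerSeries.X_pow_eq,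
    MvPowerSeries.monomial_mul_monomial, one_mul, Dg]

lemma substPM_eq (φ : PowerSeries ℂ) : substPM pXY φ = Tm φ := by
  classical
  apply MvPowerSeries.ext
  intro d
  have hsub : MvPowerSeries.coeff d (substPM pXY φ)
      = ∑ j ∈ Finset.range (degreeOf d + 1),
          PowerSeries.coeff j φ * MvPowerSeries.coeff d (pXY ^ j) := rfl
  rw [hsub, coeff_Tm]
  have hco : ∀ j, MvPowerSeries.coeff d (pXY ^ j) = if d = Dg j j then 1 else 0 := by
    intro j
    rw [pXY_pow, MvPowerSeries.coeff_monomial]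
  by_cases hd : d 0 = d 1
  · rw [if_pos hd]
    have hdeq : d = Dg (d 0) (d 0) := by
      conv_lhs => rw [eq_Dg d]
      rw [← hd]
    rw [Finset.sum_congr rfl (fun j _ => by
      rw [hco j]
      by_cases h : j = d 0
      · rw [if_pos (by rw [h, ← hdeq]), if_pos h]
      · rw [if_neg (fun hc => h (by
            have := (Dg_inj (hdeq.symm.trans hc)).1
            omega)), if_neg h, mul_zero]
      : ∀ j ∈ Finset.range (degreeOf d + 1),
          PowerSeries.coeff j φ * MvPowerSeries.coeff d (pXY ^ j)
            = if j = d 0 then PowerSeries.coeff j φ * 1 else 0)]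
    rw [Finset.sum_ite_eq' (Finset.range (degreeOf d + 1)) (d 0)
      (fun j => PowerSeries.coeff j φ * 1)]
    rw [if_pos (by rw [Finset.mem_range, degreeOf_eq]; omega), mul_one]
  · rw [if_neg hd]
    apply Finset.sum_eq_zero
    intro j _
    rw [hco j, if_neg (fun h => hd (by rw [h, Dg_zero, Dg_one])), mul_zero]

lemma coeff_X0_mul_Tm (d : Fin 2 →₀ ℕ) (h : PowerSeries ℂ) :
    MvPowerSeries.coeff d (MvPowerSeries.X 0 * Tm h)
      = if d 0 = d 1 + 1 then PowerSeries.coeff (d 1) h else 0 := by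
  classical
  have e0 : ((d - Finsupp.single (0 : Fin 2) 1 : Fin 2 →₀ ℕ)) 0 = d 0 - 1 := by
    rw [Finsupp.tsub_apply, Finsupp.single_eq_same]
  have e1 : ((d - Finsupp.single (0 : Fin 2) 1 : Fin 2 →₀ ℕ)) 1 = d 1 := by
    rw [Finsupp.tsub_apply, Finsupp.single_eq_of_ne (by decide), Nat.sub_zero]
  rw [show (MvPowerSeries.X 0 : MvPowerSeries (Fin 2) ℂ)
      = MvPowerSeries.monomial (Finsupp.single 0 1) 1 from rfl,
    MvPowerSeries.coeff_monomial_mul, coeff_Tm, e0, e1]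
  by_cases hd : d 0 = d 1 + 1
  · rw [if_pos hd, if_pos (Finsupp.single_le_iff.mpr (by omega)), if_pos (by omega), one_mul,
      show d 0 - 1 = d 1 from by omega]
  · rw [if_neg hd]
    by_cases h1 : Finsupp.single (0 : Fin 2) 1 ≤ d
    · have h2 : 1 ≤ d 0 := Finsupp.single_le_iff.mp h1
      rw [if_pos h1, if_neg (fun hc => hd (by omega)), mul_zero]
    · rw [if_neg h1]

lemma Gpow (γ δ : PowerSeries ℂ) (a : ℕ) :
    (MvPowerSeries.X 0 * Tm γ) ^ (a+1) * (MvPowerSeries.X 1 * Tm δ) ^ a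
      = MvPowerSeries.X 0 * Tm (γ * (PowerSeries.X * γ * δ) ^ a) := by
  have h1 : γ * (PowerSeries.X * γ * δ) ^ a
      = PowerSeries.X ^ a * (γ ^ (a+1) * δ ^ a) := by ring
  rw [h1, Tm_mul, Tm_pow, Tm_X, Tm_mul, Tm_pow, Tm_pow]
  ring

lemma Mmap_zero (φ ψ : PowerSeries ℂ) : Mmap φ ψ 0 = MvPowerSeries.X 0 * Tm φ := by
  rw [Mmap, Matrix.cons_val_zero, substPM_eq]

lemma Mmap_one (φ ψ : PowerSeries ℂ) : Mmap φ ψ 1 = MvPowerSeries.X 1 * Tm ψ := by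
  rw [Mmap, Matrix.cons_val_one, Matrix.cons_val_zero, substPM_eq]

lemma compM_Mmap_zero (α β γ δ : PowerSeries ℂ) :
    compM (Mmap α β) (Mmap γ δ) 0
      = MvPowerSeries.X 0 * Tm (γ * compP α (PowerSeries.X * γ * δ)) := by
  classical
  have hρ0 : PowerSeries.constantCoeff (PowerSeries.X * γ * δ) = 0 := by
    simp
  show substM (Mmap γ δ) (Mmap α β 0) = _
  apply MvPowerSeries.ext
  intro d
  have hL : MvPowerSeries.coeff d (substM (Mmap γ δ) (Mmap α β 0))
      = ∑ e ∈ Finset.Iic (Finsupp.equivFunOnFinite.symm fun _ => degreeOf d),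
          MvPowerSeries.coeff e (Mmap α β 0)
            * MvPowerSeries.coeff d (∏ i, Mmap γ δ i ^ e i) := rfl
  rw [hL, coeff_X0_mul_Tm]
  have hprod : ∀ e : Fin 2 →₀ ℕ, (∏ i, Mmap γ δ i ^ e i)
      = (MvPowerSeries.X 0 * Tm γ) ^ e 0 * (MvPowerSeries.X 1 * Tm δ) ^ e 1 := by
    intro e
    rw [Fin.prod_univ_two, Mmap_zero, Mmap_one]
  have hcoeff0 : ∀ e : Fin 2 →₀ ℕ, MvPowerSeries.coeff e (Mmap α β 0)
      = if e 0 = e 1 + 1 then PowerSeries.coeff (e 1) α else 0 := by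
    intro e
    rw [Mmap_zero, coeff_X0_mul_Tm]
  by_cases hd : d 0 = d 1 + 1
  case neg =>
    rw [if_neg hd]
    apply Finset.sum_eq_zero
    intro e _
    rw [hcoeff0]
    by_cases h1 : e 0 = e 1 + 1
    · rw [if_pos h1, hprod, h1, Gpow, coeff_X0_mul_Tm, if_neg hd, mul_zero]
    · rw [if_neg h1, zero_mul]
  case pos =>
    rw [if_pos hd]
    have hDd : degreeOf d = 2 * d 1 + 1 := by
      rw [degreeOf_eq]
      omega
    rw [← Finset.sum_subset
        (h := fun e (he : e ∈ (Finset.range (d 1 + 1)).image (fun a => Dg (a+1) a)) => by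
          rw [Finset.mem_image] at he
          obtain ⟨a, ha, rfl⟩ := he
          rw [Finset.mem_range] at ha
          rw [Finset.mem_Iic]
          exact Dg_le (le_of_le_of_eq (by omega : a + 1 ≤ 2 * d 1 + 1) hDd.symm)
            (le_of_le_of_eq (by omega : a ≤ 2 * d 1 + 1) hDd.symm))
        (hf := by
          intro e he hne
          rw [hcoeff0]
          by_cases h1 : e 0 = e 1 + 1
          · rw [if_pos h1, hprod, h1, Gpow, coeff_X0_mul_Tm, if_pos hd]
            have hgt : d 1 < e 1 := by
              by_contra hle
              push_neg at hle
              apply hne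
              rw [Finset.mem_image]
              refine ⟨e 1, Finset.mem_range.mpr (by omega), ?_⟩
              conv_rhs => rw [eq_Dg e]
              rw [h1]
            rw [coeff_mul_pow_small hρ0 hgt, mul_zero]
          · rw [if_neg h1, zero_mul])]
    rw [Finset.sum_image (by
      intro a _ b _ h
      exact (Dg_inj h).2)]
    rw [Finset.sum_congr rfl (fun a _ => by
      rw [hcoeff0, hprod, Dg_zero, Dg_one, if_pos rfl, Gpow, coeff_X0_mul_Tm, if_pos hd]
      : ∀ a ∈ Finset.range (d 1 + 1),
          MvPowerSeries.coeff (Dg (a+1) a) (Mmap α β 0)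
            * MvPowerSeries.coeff d (∏ i, Mmap γ δ i ^ (Dg (a+1) a) i)
          = PowerSeries.coeff a α
              * PowerSeries.coeff (d 1) (γ * (PowerSeries.X * γ * δ) ^ a))]
    rw [coeff_mul_compP γ α _ hρ0 (d 1)]

/-- If F₁ = (z₁φ(p), z₂/φ(p)) (so P(F₁) = id) commutes with F₂ = (z₁φ₂(p), z₂ψ₂(p)),
then either φ is constant (F₁ is linear diagonal) or ρ₂(t) = tφ₂(t)ψ₂(t) has finite
compositional order. -/
theorem const_or_finite_order_of_commuting (φ φ₂ ψ₂ : PowerSeries ℂ)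
    (hφ : PowerSeries.constantCoeff φ ≠ 0)
    (hφ₂ : PowerSeries.constantCoeff φ₂ ≠ 0) (hψ₂ : PowerSeries.constantCoeff ψ₂ ≠ 0)
    (hcomm : compM (Mmap φ φ⁻¹) (Mmap φ₂ ψ₂) = compM (Mmap φ₂ ψ₂) (Mmap φ φ⁻¹)) :
    (∃ c : ℂ, φ = PowerSeries.C c) ∨
      ∃ m : ℕ, 0 < m ∧ iterP (PowerSeries.X * φ₂ * ψ₂) m = PowerSeries.X := by
  classical
  by_cases hconst : ∃ c : ℂ, φ = PowerSeries.C c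
  · exact Or.inl hconst
  refine Or.inr ?_
  have h0 := congrFun hcomm 0
  rw [compM_Mmap_zero φ φ⁻¹ φ₂ ψ₂, compM_Mmap_zero φ₂ ψ₂ φ φ⁻¹] at h0
  have hXinv : PowerSeries.X * φ * φ⁻¹ = PowerSeries.X := by
    rw [mul_assoc, PowerSeries.mul_inv_cancel φ hφ, mul_one]
  rw [hXinv, compP_X] at h0
  have hX0 : (MvPowerSeries.X 0 : MvPowerSeries (Fin 2) ℂ) ≠ 0 := by
    intro H
    have := congrArg (MvPowerSeries.coeff (Finsupp.single 0 1)) H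
    simp [MvPowerSeries.coeff_X] at this
  have h1 : Tm (φ₂ * compP φ (PowerSeries.X * φ₂ * ψ₂)) = Tm (φ * φ₂) :=
    mul_left_cancel₀ hX0 h0
  have h2 : φ₂ * compP φ (PowerSeries.X * φ₂ * ψ₂) = φ * φ₂ := Tm_injective h1
  have hφ₂0 : φ₂ ≠ 0 := fun h => hφ₂ (by simp [h])
  have hfix : compP φ (PowerSeries.X * φ₂ * ψ₂) = φ := by
    apply mul_left_cancel₀ hφ₂0
    rw [h2]
    ring
  have hρ0 : PowerSeries.constantCoeff (PowerSeries.X * φ₂ * ψ₂) = 0 := by simp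
  have hρ1 : PowerSeries.coeff 1 (PowerSeries.X * φ₂ * ψ₂) ≠ 0 := by
    rw [mul_assoc]
    rw [show PowerSeries.coeff 1 (PowerSeries.X * (φ₂ * ψ₂))
        = PowerSeries.constantCoeff (φ₂ * ψ₂) from by
      rw [← PowerSeries.coeff_zero_eq_constantCoeff]
      simpa using PowerSeries.coeff_X_pow_mul (φ₂ * ψ₂) 1 0]
    rw [map_mul]
    exact mul_ne_zero hφ₂ hψ₂
  exact order_finite hρ0 hρ1 hfix hconst


end
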